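/- For the moving-domain bilinear form b_h(u,v) = ∫_Q (∂_t u·v + θh ∂_t u ∂_t v + ∇_x u·∇_x v − θh ∂_t∇_x u·∇_x v) dxdt + θh ∫_{Σ_T} ∇_x u·∇_x v ds, if 0 < θ < (2 C_{inv,1} C_u)^{-1}, then b_h(v_h, v_h) ≥ ½ ‖v_h‖²_{h,m} for all v_h ∈ V_{0h}, where ‖v‖²_{h,m} = ‖∇_x v‖²_{L²(Q)} + θh‖∂_t v‖²_{L²(Q)} + ½‖v‖²_{L²(Σ_T)} + θh‖∇_x v‖²_{L²(Σ_T)}. -/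

import Mathlib

open scoped RealInnerProductSpace

theorem moving_domain_coercivity
    {H F B Fb : Type*}
    [NormedAddCommGroup H] [InnerProductSpace ℝ H]
    [NormedAddCommGroup F] [InnerProductSpace ℝ F]
    [NormedAddCommGroup B] [InnerProductSpace ℝ B]
    [NormedAddCommGroup Fb] [InnerProductSpace ℝ Fb]
    (θ h Cu Cinv : ℝ) (hθ : 0 < θ) (hh : 0 < h) (hCu : 0 < Cu) (hCinv : 0 < Cinv)
    (hθsmall : θ < (2 * Cinv * Cu)⁻¹)
    (vQ Dv : H) (Gv DGv : F) (vT : B) (GvT : Fb)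
    (hGauss : ⟪Dv, vQ⟫ = (1 / 2) * ‖vT‖ ^ 2)
    (hInv : ‖DGv‖ ≤ Cinv * Cu * h⁻¹ * ‖Gv‖) :
    ⟪Dv, vQ⟫ + θ * h * ‖Dv‖ ^ 2 + ‖Gv‖ ^ 2 - θ * h * ⟪DGv, Gv⟫ + θ * h * ‖GvT‖ ^ 2
      ≥ (1 / 2) *
        (‖Gv‖ ^ 2 + θ * h * ‖Dv‖ ^ 2 + (1 / 2) * ‖vT‖ ^ 2 + θ * h * ‖GvT‖ ^ 2) := by
  have hCS : ⟪DGv, Gv⟫ ≤ ‖DGv‖ * ‖Gv‖ := real_inner_le_norm _ _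
  have h1 : θ * h * ⟪DGv, Gv⟫ ≤ θ * h * (Cinv * Cu * h⁻¹ * ‖Gv‖ * ‖Gv‖) := by
    have : ⟪DGv, Gv⟫ ≤ Cinv * Cu * h⁻¹ * ‖Gv‖ * ‖Gv‖ :=
      hCS.trans (by nlinarith [norm_nonneg Gv, norm_nonneg DGv])
    exact mul_le_mul_of_nonneg_left this (by positivity)
  have h2 : θ * h * (Cinv * Cu * h⁻¹ * ‖Gv‖ * ‖Gv‖) = θ * Cinv * Cu * ‖Gv‖ ^ 2 := by
    field_simp
  have h3 : θ * Cinv * Cu * ‖Gv‖ ^ 2 ≤ (1/2) * ‖Gv‖ ^ 2 := by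
    have : θ * (2 * Cinv * Cu) < 1 := by
      have := (lt_inv_comm₀ (by positivity) (by positivity)).mpr hθsmall
      calc θ * (2 * Cinv * Cu) < (2 * Cinv * Cu)⁻¹ * (2 * Cinv * Cu) := by
            apply mul_lt_mul_of_pos_right hθsmall; positivity
        _ = 1 := by field_simp
    nlinarith [sq_nonneg ‖Gv‖]
  rw [hGauss]
  nlinarith [mul_pos hθ hh, sq_nonneg ‖Dv‖, sq_nonneg ‖GvT‖, sq_nonneg ‖vT‖, mul_nonneg (le_of_lt (mul_pos hθ hh)) (sq_nonneg ‖Dv‖), mul_nonneg (le_of_lt (mul_pos hθ hh)) (sq_nonneg ‖GvT‖)]
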